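/- For every positive integer n, the minimal domination number of the (2n+1)-dimensional hypercube satisfies γ_{2n+1} ≤ 2^n · γ_n. -/

import Mathlib

open Finset Function

/-- A finite subset of the hypercube `Q_n = (ZMod 2)^n` is dominating if every point of the
hypercube is at Hamming distance at most 1 from some element of the subset. -/
def IsDominating {n : ℕ} (Δ : Finset (Fin n → ZMod 2)) : Prop :=
  ∀ y : Fin n → ZMod 2, ∃ x ∈ Δ, hammingDist x y ≤ 1

/-- The minimal domination number `γ_n` of the `n`-dimensional hypercube. -/
noncomputable def gamma (n : ℕ) : ℕ :=
  sInf {k | ∃ Δ : Finset (Fin n → ZMod 2), IsDominating Δ ∧ Δ.card = k}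

section helpers
variable {ι κ : Type*} [Fintype ι] [Fintype κ] {α : Type*} [DecidableEq α]

theorem hd_comp_equiv (e : κ ≃ ι) (f g : ι → α) :
    hammingDist (f ∘ e) (g ∘ e) = hammingDist f g := by
  unfold hammingDist
  apply Finset.card_bij (fun i _ => e i)
  · intro i hi; simpa using by simpa using hi
  · intro a ha b hb h; exact e.injective h
  · intro b hb; exact ⟨e.symm b, by simpa using by simpa using hb, by simp⟩

theorem hd_sum (a c : ι → α) (b d : κ → α) :
    hammingDist (Sum.elim a b) (Sum.elim c d) = hammingDist a c + hammingDist b d := by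
  simp_rw [hammingDist, Finset.card_filter]
  rw [Fintype.sum_sum_type]
  simp
  congr 1 <;> refine Finset.sum_congr rfl fun i _ => ?_ <;> split_ifs <;> simp_all

theorem hd_add {G : Type*} [AddGroup G] [DecidableEq G] (a x y : ι → G) :
    hammingDist (a + x) (a + y) = hammingDist x y := by
  have := hammingDist_comp (β := fun _ : ι => G) (fun i => (a i + ·)) (x := x) (y := y)
    (fun i => add_right_injective (a i))
  exact this

theorem hd_char2 (u w : ι → ZMod 2) : hammingDist u w = hammingNorm (u + w) := by
  rw [← hammingDist_zero_right, ← hd_add w (u + w) 0]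
  congr 1
  · funext i
    simp only [Pi.add_apply]
    exact ((by decide : ∀ x y : ZMod 2, x = y + (x + y)) (u i) (w i))
  · simp

theorem par_eq (v : ι → ZMod 2) : (∑ i, v i) = (hammingNorm v : ZMod 2) := by
  unfold hammingNorm
  rw [Finset.card_filter, Nat.cast_sum]
  apply Finset.sum_congr rfl
  intro i _
  rcases (by decide : ∀ x : ZMod 2, x = if x ≠ 0 then ((1:ℕ):ZMod 2) else ((0:ℕ):ZMod 2)) (v i) with h
  split <;> simp_all
end helpers

/-- For every positive integer `n`, `γ_{2n+1} ≤ 2^n * γ_n`. -/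
theorem stmt_0 (n : ℕ) (hn : 0 < n) : gamma (2 * n + 1) ≤ 2 ^ n * gamma n := by
  classical
  have hne : {k | ∃ Δ : Finset (Fin n → ZMod 2), IsDominating Δ ∧ Δ.card = k}.Nonempty :=
    ⟨(Finset.univ : Finset (Fin n → ZMod 2)).card, Finset.univ,
      fun y => ⟨y, Finset.mem_univ y, by simp⟩, rfl⟩
  obtain ⟨Δ, hΔdom, hΔcard⟩ := Nat.sInf_mem hne
  let e : (Fin n ⊕ (Fin n ⊕ Fin 1)) ≃ Fin (2 * n + 1) :=
    ((Equiv.sumCongr (Equiv.refl (Fin n)) finSumFinEquiv).trans finSumFinEquiv).trans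
      (finCongr (by ring))
  let par : (Fin n → ZMod 2) → ZMod 2 := fun a => ∑ i, a i
  let P : (Fin n → ZMod 2) × (Fin n → ZMod 2) → (Fin (2 * n + 1) → ZMod 2) :=
    fun p => (Sum.elim p.1 (Sum.elim (p.1 + p.2) (fun _ => par p.1))) ∘ e.symm
  let Δ' : Finset (Fin (2 * n + 1) → ZMod 2) :=
    Finset.image P (Finset.univ ×ˢ Δ)
  have hlast : ∀ x z : ZMod 2, hammingDist (fun _ : Fin 1 => x) (fun _ : Fin 1 => z) ≤ 1 := by
    intro x z
    simpa using hammingDist_le_card_fintype (x := fun _ : Fin 1 => x) (y := fun _ : Fin 1 => z)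
  have hdom : IsDominating Δ' := by
    intro y
    set a : Fin n → ZMod 2 := fun i => y (e (Sum.inl i)) with ha
    set b : Fin n → ZMod 2 := fun i => y (e (Sum.inr (Sum.inl i))) with hb
    set c : ZMod 2 := y (e (Sum.inr (Sum.inr 0))) with hc
    have hy : y ∘ e = Sum.elim a (Sum.elim b (fun _ => c)) := by
      funext i
      rcases i with i | i | i
      · rfl
      · rfl
      · simp [Subsingleton.elim i 0, hc]
    -- splitting of distances for points of the form P (a₀, d₀)
    have hP : ∀ a₀ d₀ : Fin n → ZMod 2, hammingDist (P (a₀, d₀)) y =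
        hammingDist a₀ a + (hammingDist (a₀ + d₀) b +
          hammingDist (fun _ : Fin 1 => par a₀) (fun _ : Fin 1 => c)) := by
      intro a₀ d₀
      have h1 : hammingDist (P (a₀, d₀)) y = hammingDist (P (a₀, d₀) ∘ e) (y ∘ e) :=
        (hd_comp_equiv e _ _).symm
      have h2 : P (a₀, d₀) ∘ e = Sum.elim a₀ (Sum.elim (a₀ + d₀) (fun _ => par a₀)) := by
        funext i; simp [P]
      rw [h1, h2, hy, hd_sum, hd_sum]
    obtain ⟨d, hd, hdist⟩ := hΔdom (a + b)
    set v : Fin n → ZMod 2 := d + (a + b) with hv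
    have hnv : hammingNorm v ≤ 1 := by rw [← hd_char2]; exact hdist
    have hvd : a + v + d = b := by
      funext i
      exact (by decide : ∀ x y z : ZMod 2, x + (z + (x + y)) + z = y) (a i) (b i) (d i)
    have hpv : par v = (hammingNorm v : ZMod 2) := par_eq v
    by_cases hpc : par a + par v = c
    · -- move in the first block by v
      refine ⟨P (a + v, d), Finset.mem_image.2 ⟨(a + v, d),
        Finset.mem_product.2 ⟨Finset.mem_univ _, hd⟩, rfl⟩, ?_⟩
      rw [hP]
      have e1 : hammingDist (a + v) a = hammingNorm v := by
        rw [hd_char2]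
        congr 1
        funext i
        exact (by decide : ∀ x y : ZMod 2, (x + y) + x = y) (a i) (v i)
      have e2 : hammingDist (a + v + d) b = 0 := by rw [hvd]; exact hammingDist_self b
      have e3 : par (a + v) = c := by
        have : par (a + v) = par a + par v := by
          simp only [par, Pi.add_apply]
          rw [Finset.sum_add_distrib]
        rw [this, hpc]
      rw [e1, e2, e3]
      simpa using hnv
    · -- keep the first block
      refine ⟨P (a, d), Finset.mem_image.2 ⟨(a, d),
        Finset.mem_product.2 ⟨Finset.mem_univ _, hd⟩, rfl⟩, ?_⟩
      rw [hP]
      have e1 : hammingDist (a + d) b = hammingNorm v := by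
        rw [hd_char2]
        congr 1
        funext i
        exact (by decide : ∀ x y z : ZMod 2, (x + z) + y = z + (x + y)) (a i) (b i) (d i)
      rw [hammingDist_self, e1]
      rcases Nat.le_one_iff_eq_zero_or_eq_one.mp hnv with h | h
      · rw [h]; simpa using hlast (par a) c
      · have hp1 : par v = 1 := by rw [hpv, h]; rfl
        rw [h]
        have hpa : par a = c := by
          rw [hp1] at hpc
          exact (by decide : ∀ x y : ZMod 2, ¬ x + 1 = y → x = y) (par a) c hpc
        rw [hpa, hammingDist_self]
  have hle : gamma (2 * n + 1) ≤ Δ'.card := Nat.sInf_le ⟨Δ', hdom, rfl⟩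
  calc gamma (2 * n + 1) ≤ Δ'.card := hle
    _ ≤ (Finset.univ ×ˢ Δ).card := Finset.card_image_le
    _ = 2 ^ n * gamma n := by
        rw [Finset.card_product, Finset.card_univ, hΔcard]
        congr 1
        simp [gamma]
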